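/- Fix integers 1 ≤ k ≤ n, and let G be the graph whose vertices are the injective tuples x : Fin k → Fin n, with x adjacent to y if and only if there exists a coordinate i such that x(j) = y(j) for all j ≠ i and either x(i) + 1 = y(i) or y(i) + 1 = x(i) (as natural numbers). Then G has exactly k! connected components, and every connected component contains exactly binom(n, k) vertices, where binom(n,k) = n!/(k!(n−k)!). -/

import Mathlib

/-- Configuration moves of `k` distinguishable hard-core bosons on the path with `n`
vertices: `x` and `y` (injective tuples) are related iff they agree except at one
coordinate `i`, where they differ by one site. -/
def hcRel (n k : ℕ) (x y : {x : Fin k → Fin n // Function.Injective x}) : Prop :=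
  ∃ i : Fin k, (∀ j : Fin k, j ≠ i → x.1 j = y.1 j) ∧
    ((x.1 i : ℕ) + 1 = (y.1 i : ℕ) ∨ (y.1 i : ℕ) + 1 = (x.1 i : ℕ))

/-- The configuration-space graph of `k` distinguishable hard-core bosons on the path
with `n` vertices. -/
def hcGraph (n k : ℕ) : SimpleGraph {x : Fin k → Fin n // Function.Injective x} :=
  SimpleGraph.fromRel (hcRel n k)


namespace HC
variable {n k : ℕ}

abbrev V (n k : ℕ) := {x : Fin k → Fin n // Function.Injective x}

/-- rank of coordinate i: number of coordinates with smaller value -/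
def rnk (x : V n k) (i : Fin k) : ℕ :=
  (Finset.univ.filter (fun j => x.1 j < x.1 i)).card

lemma rnk_lt (x : V n k) (i : Fin k) : rnk x i < k := by
  have : (Finset.univ.filter (fun j => x.1 j < x.1 i)) ⊂ Finset.univ := by
    refine Finset.ssubset_univ_iff.2 ?_
    intro h
    have := h ▸ Finset.mem_univ i
    simp at this
  simpa [rnk] using Finset.card_lt_card this

/-- the rank function as a map Fin k → Fin k -/
def rnkF (x : V n k) : Fin k → Fin k := fun i => ⟨rnk x i, rnk_lt x i⟩

lemma rnk_lt_rnk {x : V n k} {a b : Fin k} (h : x.1 a < x.1 b) : rnk x a < rnk x b := by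
  apply Finset.card_lt_card
  constructor
  · intro j hj
    simp only [Finset.mem_filter, Finset.mem_univ, true_and] at hj ⊢
    exact hj.trans h
  · intro hsub
    have := hsub (by simp [h] : a ∈ Finset.univ.filter (fun j => x.1 j < x.1 b))
    simp at this

lemma lt_iff_rnk_lt (x : V n k) (a b : Fin k) : x.1 a < x.1 b ↔ rnk x a < rnk x b := by
  constructor
  · exact rnk_lt_rnk
  · intro h
    rcases lt_trichotomy (x.1 a) (x.1 b) with h1 | h1 | h1
    · exact h1
    · exact absurd (congrArg (rnk x) (x.2 h1)) (by omega)
    · exact absurd (rnk_lt_rnk h1) (by omega)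

lemma rnkF_injective (x : V n k) : Function.Injective (rnkF x) := by
  intro a b hab
  have h : rnk x a = rnk x b := congrArg Fin.val hab
  rcases lt_trichotomy (x.1 a) (x.1 b) with h1 | h1 | h1
  · exact absurd (rnk_lt_rnk h1) (by omega)
  · exact x.2 h1
  · exact absurd (rnk_lt_rnk h1) (by omega)

lemma rnk_eq_of_cmp {x y : V n k} (h : ∀ a b, x.1 a < x.1 b ↔ y.1 a < y.1 b) :
    rnkF x = rnkF y := by
  funext i
  apply Fin.ext
  show rnk x i = rnk y i
  unfold rnk
  congr 1
  apply Finset.filter_congr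
  intro j _
  simp [h j i]

lemma cmp_of_rel {x y : V n k} (h : hcRel n k x y) :
    ∀ a b, x.1 a < x.1 b ↔ y.1 a < y.1 b := by
  obtain ⟨i, hoff, hstep⟩ := h
  intro a b
  by_cases hab : a = b
  · subst hab; simp
  by_cases ha : a = i <;> by_cases hb : b = i
  · exact absurd (ha.trans hb.symm) hab
  · subst ha
    have hxb : (x.1 b : ℕ) = (y.1 b : ℕ) := congrArg Fin.val (hoff b hb)
    have h1 : (x.1 b : ℕ) ≠ (x.1 a : ℕ) := fun hc => hb (x.2 (Fin.ext hc))
    have h2 : (y.1 b : ℕ) ≠ (y.1 a : ℕ) := fun hc => hb (y.2 (Fin.ext hc))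
    rw [Fin.lt_def, Fin.lt_def]
    omega
  · subst hb
    have hxa : (x.1 a : ℕ) = (y.1 a : ℕ) := congrArg Fin.val (hoff a ha)
    have h1 : (x.1 a : ℕ) ≠ (x.1 b : ℕ) := fun hc => ha (x.2 (Fin.ext hc))
    have h2 : (y.1 a : ℕ) ≠ (y.1 b : ℕ) := fun hc => ha (y.2 (Fin.ext hc))
    rw [Fin.lt_def, Fin.lt_def]
    omega
  · rw [hoff a ha, hoff b hb]

lemma rnkF_eq_of_adj {x y : V n k} (h : (hcGraph n k).Adj x y) : rnkF x = rnkF y := by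
  rw [hcGraph, SimpleGraph.fromRel_adj] at h
  rcases h.2 with h' | h'
  · exact rnk_eq_of_cmp (cmp_of_rel h')
  · exact (rnk_eq_of_cmp (cmp_of_rel h')).symm

end HC

namespace HC
variable {n k : ℕ}

/-- canonical left-packed configuration with order type f -/
def canon (hkn : k ≤ n) (f : Fin k → Fin k) (hf : Function.Injective f) : V n k :=
  ⟨fun i => ⟨f i, lt_of_lt_of_le (f i).2 hkn⟩,
   by
    intro a b h
    apply hf
    apply Fin.ext
    simpa using congrArg Fin.val h⟩

lemma card_filter_lt_of_inj {f : Fin k → Fin k} (hf : Function.Injective f) (i : Fin k) :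
    (Finset.univ.filter (fun j => f j < f i)).card = (f i : ℕ) := by
  have hsurj : Function.Surjective f := (Finite.injective_iff_bijective.mp hf).2
  rw [← Fin.card_Iio (b := f i)]
  apply Finset.card_bij (fun j _ => f j)
  · intro a ha
    simp only [Finset.mem_filter] at ha
    simpa using ha.2
  · intro a _ b _ h
    exact hf h
  · intro b hb
    obtain ⟨a, rfl⟩ := hsurj b
    exact ⟨a, by simpa using hb, rfl⟩

lemma rnkF_canon (hkn : k ≤ n) (f : Fin k → Fin k) (hf : Function.Injective f) :
    rnkF (canon hkn f hf) = f := by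
  funext i
  apply Fin.ext
  show rnk _ i = (f i : ℕ)
  rw [← card_filter_lt_of_inj hf i]
  rfl

lemma rnkF_eq_of_reachable {x y : V n k} (h : (hcGraph n k).Reachable x y) :
    rnkF x = rnkF y := by
  obtain ⟨p⟩ := h
  induction p with
  | nil => rfl
  | cons h p ih => exact (rnkF_eq_of_adj h).trans ih

/-- every configuration reaches the canonical configuration of its order type -/
lemma reach (hkn : k ≤ n) : ∀ N (x : V n k), (∑ i, (x.1 i : ℕ)) = N →
    (hcGraph n k).Reachable x (canon hkn (rnkF x) (rnkF_injective x)) := by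
  intro N
  induction N using Nat.strong_induction_on with
  | _ N IH =>
  intro x hN
  by_cases H : ∀ i, 1 ≤ (x.1 i : ℕ) → ∃ j, (x.1 j : ℕ) = (x.1 i : ℕ) - 1
  · -- x is already canonical
    have claim : ∀ d (i : Fin k), d ≤ (x.1 i : ℕ) → ∃ j, (x.1 j : ℕ) = (x.1 i : ℕ) - d := by
      intro d
      induction d with
      | zero => intro i _; exact ⟨i, by omega⟩
      | succ d ihd =>
        intro i hd
        obtain ⟨j, hj⟩ := ihd i (by omega)
        obtain ⟨j', hj'⟩ := H j (by omega)
        exact ⟨j', by omega⟩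
    have hval : ∀ i, (x.1 i : ℕ) = rnk x i := by
      intro i
      rw [rnk, ← Finset.card_range ((x.1 i : ℕ))]
      symm
      apply Finset.card_bij (fun j _ => (x.1 j : ℕ))
      · intro a ha
        simp only [Finset.mem_filter, Finset.mem_univ, true_and, Fin.lt_def] at ha
        simpa using ha
      · intro a _ b _ h
        exact x.2 (Fin.ext h)
      · intro b hb
        simp only [Finset.mem_range] at hb
        obtain ⟨j, hj⟩ := claim ((x.1 i : ℕ) - b) i (by omega)
        refine ⟨j, ?_, by omega⟩
        simp only [Finset.mem_filter, Finset.mem_univ, true_and, Fin.lt_def]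
        omega
    have hx : x = canon hkn (rnkF x) (rnkF_injective x) := by
      apply Subtype.ext
      funext i
      apply Fin.ext
      exact hval i
    exact hx ▸ SimpleGraph.Reachable.refl x
  · push_neg at H
    obtain ⟨i, h1, h2⟩ := H
    set v : Fin n := ⟨(x.1 i : ℕ) - 1, by omega⟩ with hv
    have hvne : ∀ j, x.1 j ≠ v := by
      intro j hj
      exact h2 j (by rw [hj])
    set y : V n k := ⟨Function.update x.1 i v, by
      intro a b hab
      by_cases ha : a = i <;> by_cases hb : b = i
      · rw [ha, hb]
      · rw [ha] at hab ⊢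
        rw [Function.update_self, Function.update_of_ne hb] at hab
        exact absurd hab.symm (hvne b)
      · rw [hb] at hab ⊢
        rw [Function.update_self, Function.update_of_ne ha] at hab
        exact absurd hab (hvne a)
      · rw [Function.update_of_ne ha, Function.update_of_ne hb] at hab
        exact x.2 hab⟩ with hy
    have hyi : (y.1 i : ℕ) = (x.1 i : ℕ) - 1 := by
      show ((Function.update x.1 i v i : Fin n) : ℕ) = _
      rw [Function.update_self]
    have hyj : ∀ j, j ≠ i → y.1 j = x.1 j := fun j hj => Function.update_of_ne hj _ _
    have hxyne : x ≠ y := by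
      intro hxy
      have : (x.1 i : ℕ) = (y.1 i : ℕ) := by rw [hxy]
      omega
    have hadj : (hcGraph n k).Adj x y := by
      rw [hcGraph, SimpleGraph.fromRel_adj]
      exact ⟨hxyne, Or.inr ⟨i, hyj, Or.inl (by omega)⟩⟩
    have hsum : (∑ j, (y.1 j : ℕ)) = N - 1 ∧ 1 ≤ N := by
      have e1 : (∑ j, (y.1 j : ℕ)) + (x.1 i : ℕ) = (∑ j, (x.1 j : ℕ)) + (y.1 i : ℕ) := by
        rw [← Finset.sum_erase_add Finset.univ _ (Finset.mem_univ i),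
            ← Finset.sum_erase_add Finset.univ _ (Finset.mem_univ i)]
        have : ∀ j ∈ Finset.univ.erase i, (y.1 j : ℕ) = (x.1 j : ℕ) := by
          intro j hj
          rw [hyj j (Finset.mem_erase.mp hj).1]
        rw [Finset.sum_congr rfl this]
        ring
      have e2 : (x.1 i : ℕ) ≤ ∑ j, (x.1 j : ℕ) :=
        Finset.single_le_sum (f := fun j => (x.1 j : ℕ)) (fun _ _ => Nat.zero_le _)
          (Finset.mem_univ i)
      omega
    have hrnk : rnkF y = rnkF x := (rnkF_eq_of_adj hadj).symm
    have hreach := IH (N - 1) (by omega) y hsum.1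
    have hcanon : canon hkn (rnkF y) (rnkF_injective y)
        = canon hkn (rnkF x) (rnkF_injective x) := by
      apply Subtype.ext
      funext j
      apply Fin.ext
      show ((rnkF y j : ℕ)) = ((rnkF x j : ℕ))
      rw [hrnk]
    exact hadj.reachable.trans (hcanon ▸ hreach)

lemma mk_canon (hkn : k ≤ n) (x : V n k) :
    (hcGraph n k).connectedComponentMk x
      = (hcGraph n k).connectedComponentMk (canon hkn (rnkF x) (rnkF_injective x)) :=
  SimpleGraph.ConnectedComponent.sound (reach hkn _ x rfl)

end HC

namespace HC
variable {n k : ℕ}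

def compEquiv (hkn : k ≤ n) :
    (hcGraph n k).ConnectedComponent ≃ {f : Fin k → Fin k // Function.Injective f} where
  toFun := SimpleGraph.ConnectedComponent.lift (fun x => ⟨rnkF x, rnkF_injective x⟩)
    (fun v w p _ => Subtype.ext (rnkF_eq_of_reachable ⟨p⟩))
  invFun := fun f => (hcGraph n k).connectedComponentMk (canon hkn f.1 f.2)
  left_inv := by
    refine SimpleGraph.ConnectedComponent.ind ?_
    intro x
    exact (mk_canon hkn x).symm
  right_inv := by
    intro f
    apply Subtype.ext
    exact rnkF_canon hkn f.1 f.2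

lemma mk_eq_iff (hkn : k ≤ n) (x y : V n k) :
    (hcGraph n k).connectedComponentMk y = (hcGraph n k).connectedComponentMk x
      ↔ rnkF y = rnkF x := by
  constructor
  · intro h
    exact rnkF_eq_of_reachable (SimpleGraph.ConnectedComponent.exact h)
  · intro h
    rw [mk_canon hkn y, mk_canon hkn x]
    congr 1
    apply Subtype.ext
    funext j
    apply Fin.ext
    show ((rnkF y j : ℕ)) = ((rnkF x j : ℕ))
    rw [h]

noncomputable def fiberEquiv (hkn : k ≤ n) (x : V n k) :
    {y : V n k // rnkF y = rnkF x} ≃ {s : Finset (Fin n) // s.card = k} where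
  toFun y := ⟨Finset.image y.1.1 Finset.univ, by
    rw [Finset.card_image_of_injective _ y.1.2, Finset.card_univ, Fintype.card_fin]⟩
  invFun s := ⟨⟨fun i => s.1.orderEmbOfFin s.2 (rnkF x i), by
      intro a b h
      exact rnkF_injective x ((s.1.orderEmbOfFin s.2).injective h)⟩, by
    funext i
    apply Fin.ext
    show rnk _ i = ((rnkF x i : ℕ))
    show (Finset.univ.filter
      (fun j => s.1.orderEmbOfFin s.2 (rnkF x j) < s.1.orderEmbOfFin s.2 (rnkF x i))).card
      = ((rnkF x i : ℕ))
    rw [← card_filter_lt_of_inj (rnkF_injective x) i]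
    congr 1
    apply Finset.filter_congr
    intro j _
    simp [OrderEmbedding.lt_iff_lt]⟩
  left_inv := by
    intro y
    apply Subtype.ext
    apply Subtype.ext
    funext i
    have hbij : Function.Bijective (rnkF y.1) :=
      Finite.injective_iff_bijective.mp (rnkF_injective y.1)
    set e := Equiv.ofBijective (rnkF y.1) hbij with he
    have hcard : (Finset.image y.1.1 Finset.univ).card = k := by
      rw [Finset.card_image_of_injective _ y.1.2, Finset.card_univ, Fintype.card_fin]
    have hmem : ∀ m, (y.1.1 ∘ e.symm) m ∈ Finset.image y.1.1 Finset.univ := by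
      intro m
      exact Finset.mem_image_of_mem _ (Finset.mem_univ _)
    have hmono : StrictMono (y.1.1 ∘ e.symm) := by
      intro a b hab
      show y.1.1 (e.symm a) < y.1.1 (e.symm b)
      rw [lt_iff_rnk_lt]
      have h1 : rnk y.1 (e.symm a) = (a : ℕ) := by
        have := congrArg Fin.val (e.apply_symm_apply a)
        exact this
      have h2 : rnk y.1 (e.symm b) = (b : ℕ) := by
        have := congrArg Fin.val (e.apply_symm_apply b)
        exact this
      rw [h1, h2]
      exact hab
    have huniq := Finset.orderEmbOfFin_unique hcard hmem hmono
    show (Finset.image y.1.1 Finset.univ).orderEmbOfFin _ (rnkF x i) = y.1.1 i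
    have hx : rnkF x i = e i := by
      rw [← y.2]
      rfl
    rw [hx, ← congrFun huniq (e i)]
    show y.1.1 (e.symm (e i)) = y.1.1 i
    rw [e.symm_apply_apply]
  right_inv := by
    intro s
    apply Subtype.ext
    show Finset.image (fun i => s.1.orderEmbOfFin s.2 (rnkF x i)) Finset.univ = s.1
    have hsurj : Function.Surjective (rnkF x) :=
      (Finite.injective_iff_bijective.mp (rnkF_injective x)).2
    have h1 : Finset.image (fun i => s.1.orderEmbOfFin s.2 (rnkF x i)) Finset.univ
        = Finset.image (fun m => s.1.orderEmbOfFin s.2 m) (Finset.image (rnkF x) Finset.univ) := by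
      rw [Finset.image_image]
      rfl
    rw [h1, Finset.image_univ_of_surjective hsurj]
    apply Finset.coe_injective
    rw [Finset.coe_image, Finset.coe_univ, Set.image_univ]
    exact Finset.range_orderEmbOfFin s.1 s.2

end HC

/-- the hard-core configuration graph has exactly `k!` connected
components, each containing exactly `binom(n, k)` vertices. -/
theorem stmt15 (n k : ℕ) (hk : 1 ≤ k) (hkn : k ≤ n) :
    Nat.card (hcGraph n k).ConnectedComponent = k.factorial ∧
      ∀ c : (hcGraph n k).ConnectedComponent,
        Nat.card {x : {x : Fin k → Fin n // Function.Injective x} //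
          (hcGraph n k).connectedComponentMk x = c} = n.choose k := by
  constructor
  · rw [Nat.card_congr (HC.compEquiv hkn),
        Nat.card_congr (Equiv.subtypeInjectiveEquivEmbedding (Fin k) (Fin k)),
        Nat.card_eq_fintype_card, Fintype.card_embedding_eq, Fintype.card_fin,
        Nat.descFactorial_self]
  · intro c
    induction c using SimpleGraph.ConnectedComponent.ind with
    | _ x =>
      rw [Nat.card_congr ((Equiv.subtypeEquivRight
            (fun y => HC.mk_eq_iff hkn x y)).trans (HC.fiberEquiv hkn x)),
          Nat.card_eq_fintype_card, Fintype.card_finset_len, Fintype.card_fin]
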